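/- Let n ≥ 3, λ ≥ 0 and δ ∈ (0, 1]. For every x ∈ ℝⁿ, the shrinkage-boosted HP cyclical component č⁽ᵐ⁾ = (I_n − δS(λ))ᵐ x converges to 0 as m → ∞. -/

import Mathlib

open Matrix Filter

noncomputable section

/-- The second-differencing matrix `Dᵀ` of the HP filter: the `(n−2) × n` real matrix with
`(Dᵀ f)_j = f_j − 2 f_{j+1} + f_{j+2}` (here written with 0-based indices). -/
def secondDiff (n : ℕ) : Matrix (Fin (n - 2)) (Fin n) ℝ := fun j t =>
  if t.1 = j.1 then 1 else if t.1 = j.1 + 1 then -2 else if t.1 = j.1 + 2 then 1 else 0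

/-- The HP smoothing matrix `S(λ) = (I_n + λ D Dᵀ)⁻¹`, where `Dᵀ = secondDiff n`. -/
def hpS (n : ℕ) (lam : ℝ) : Matrix (Fin n) (Fin n) ℝ :=
  (1 + lam • ((secondDiff n)ᵀ * secondDiff n))⁻¹

/-- A real symmetric matrix whose eigenvalues all have absolute value `< 1` satisfies
`B ^ m *ᵥ x → 0`. -/
lemma aux_tendsto_pow_mulVec {n : ℕ} (B : Matrix (Fin n) (Fin n) ℝ) (hB : B.IsHermitian)
    (h : ∀ i, |hB.eigenvalues i| < 1) (x : Fin n → ℝ) :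
    Tendsto (fun m : ℕ => (B ^ m) *ᵥ x) atTop (nhds 0) := by
  classical
  set U : Matrix (Fin n) (Fin n) ℝ := (hB.eigenvectorUnitary : Matrix (Fin n) (Fin n) ℝ)
    with hUdef
  have hU1 : U * star U = 1 := mem_unitaryGroup_iff.mp hB.eigenvectorUnitary.2
  have hU2 : star U * U = 1 := mem_unitaryGroup_iff'.mp hB.eigenvectorUnitary.2
  have hspec : B = U * diagonal hB.eigenvalues * star U := by
    simpa [RCLike.ofReal_real_eq_id, Function.id_comp] using hB.spectral_theorem
  have hpow : ∀ m : ℕ, B ^ m = U * diagonal (fun k => hB.eigenvalues k ^ m) * star U := by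
    intro m
    induction m with
    | zero => simpa [Matrix.mul_assoc] using hU1.symm
    | succ m ih =>
      rw [pow_succ, ih]
      calc (U * diagonal (fun k => hB.eigenvalues k ^ m) * star U) * B
          = (U * diagonal (fun k => hB.eigenvalues k ^ m) * star U) *
            (U * diagonal hB.eigenvalues * star U) := by rw [← hspec]
        _ = U * (diagonal (fun k => hB.eigenvalues k ^ m) * (star U * U) *
            diagonal hB.eigenvalues) * star U := by simp only [Matrix.mul_assoc]
        _ = U * diagonal (fun k => hB.eigenvalues k ^ (m + 1)) * star U := by
            rw [hU2, Matrix.mul_one, diagonal_mul_diagonal]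
            simp [pow_succ]
  rw [tendsto_pi_nhds]
  intro i
  have key : ∀ m : ℕ, ((B ^ m) *ᵥ x) i
      = ∑ k, (U i k * ((star U) *ᵥ x) k) * hB.eigenvalues k ^ m := by
    intro m
    rw [hpow m, ← mulVec_mulVec, ← mulVec_mulVec]
    simp only [mulVec, dotProduct, diagonal_apply, ite_mul, zero_mul,
      Finset.sum_ite_eq, Finset.mem_univ, if_true]
    exact Finset.sum_congr rfl fun k _ => by ring
  have h0 : Tendsto
      (fun m : ℕ => ∑ k, (U i k * ((star U) *ᵥ x) k) * hB.eigenvalues k ^ m)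
      atTop (nhds 0) := by
    have := tendsto_finset_sum (Finset.univ : Finset (Fin n))
      (fun k _ => (tendsto_pow_atTop_nhds_zero_of_abs_lt_one (h k)).const_mul
        (U i k * ((star U) *ᵥ x) k))
    simpa using this
  simpa [key] using h0

/-- For `n ≥ 3`, `λ ≥ 0` and `δ ∈ (0, 1]`, for every `x ∈ ℝⁿ` the
shrinkage-boosted HP cyclical component `č⁽ᵐ⁾ = (I_n − δ S(λ))ᵐ x` converges to `0` as
`m → ∞`. -/
theorem stmt6 (n : ℕ) (hn : 3 ≤ n) (lam : ℝ) (hlam : 0 ≤ lam) (δ : ℝ) (hδ0 : 0 < δ)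
    (hδ1 : δ ≤ 1) (x : Fin n → ℝ) :
    Tendsto (fun m : ℕ => ((1 - δ • hpS n lam) ^ m) *ᵥ x) atTop (nhds 0) := by
  classical
  set A : Matrix (Fin (n - 2)) (Fin n) ℝ := secondDiff n with hA
  set M : Matrix (Fin n) (Fin n) ℝ := 1 + lam • (Aᵀ * A) with hMdef
  -- quadratic form of M
  have hquad : ∀ v : Fin n → ℝ, v ⬝ᵥ (M *ᵥ v) = v ⬝ᵥ v + lam * ((A *ᵥ v) ⬝ᵥ (A *ᵥ v)) := by
    intro v
    rw [hMdef, add_mulVec, one_mulVec, smul_mulVec, dotProduct_add, dotProduct_smul,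
      ← mulVec_mulVec, dotProduct_mulVec, vecMul_transpose, smul_eq_mul]
  have hCps : (Aᵀ * A).PosSemidef := by
    have := posSemidef_conjTranspose_mul_self A
    rwa [conjTranspose_eq_transpose_of_trivial] at this
  have hM : M.PosDef := by
    rw [posDef_iff_dotProduct_mulVec]
    constructor
    · simp [Matrix.IsHermitian, hMdef, conjTranspose_add, conjTranspose_smul,
        hCps.isHermitian.eq]
    · intro v hv
      have hvv : 0 < v ⬝ᵥ v := by
        have := dotProduct_star_self_pos_iff (v := v) |>.mpr hv
        simpa using this
      have hAv : 0 ≤ (A *ᵥ v) ⬝ᵥ (A *ᵥ v) := by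
        have := dotProduct_star_self_nonneg (A *ᵥ v)
        simpa using this
      have := hquad v
      simp only [star_trivial]
      rw [this]
      nlinarith
  have hdet : IsUnit M.det := hM.det_pos.ne'.isUnit
  have hMS : M * hpS n lam = 1 := by
    rw [show hpS n lam = M⁻¹ from rfl]
    exact mul_nonsing_inv M hdet
  have hSpd : (hpS n lam).PosDef := by
    rw [show hpS n lam = M⁻¹ from rfl]
    exact hM.inv
  have hB : (1 - δ • hpS n lam).IsHermitian := by
    have hS : (hpS n lam)ᵀ = hpS n lam := by
      have := hSpd.isHermitian.eq
      rwa [conjTranspose_eq_transpose_of_trivial] at this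
    simp [Matrix.IsHermitian, conjTranspose_sub, conjTranspose_smul,
      conjTranspose_eq_transpose_of_trivial, hS]
  refine aux_tendsto_pow_mulVec _ hB (fun i => ?_) x
  set μ : ℝ := hB.eigenvalues i with hμ
  set v : Fin n → ℝ := ⇑(hB.eigenvectorBasis i) with hvdef
  have hv : (1 - δ • hpS n lam) *ᵥ v = μ • v := hB.mulVec_eigenvectorBasis i
  have hvne : v ≠ 0 := by
    intro hc
    exact hB.eigenvectorBasis.orthonormal.ne_zero i (by ext j; exact congrFun hc j)
  have hvv : 0 < v ⬝ᵥ v := by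
    have := dotProduct_star_self_pos_iff (v := v) |>.mpr hvne
    simpa using this
  set s : ℝ := (1 - μ) / δ with hs
  have hSv : (hpS n lam) *ᵥ v = s • v := by
    have h1 : v - δ • ((hpS n lam) *ᵥ v) = μ • v := by
      simpa [sub_mulVec, one_mulVec, smul_mulVec] using hv
    have h2 : δ • ((hpS n lam) *ᵥ v) = (1 - μ) • v := by
      have := congrArg (fun w => v - w + δ • ((hpS n lam) *ᵥ v) - μ • v) h1
      funext j
      have := congrFun h1 j
      simp only [Pi.sub_apply, Pi.smul_apply, smul_eq_mul] at this ⊢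
      linarith
    funext j
    have := congrFun h2 j
    simp only [Pi.smul_apply, smul_eq_mul, hs] at this ⊢
    field_simp
    linarith
  have hspos : 0 < s := by
    have h1 : 0 < star v ⬝ᵥ ((hpS n lam) *ᵥ v) := hSpd.dotProduct_mulVec_pos hvne
    rw [hSv] at h1
    simp only [star_trivial, dotProduct_smul, smul_eq_mul] at h1
    nlinarith
  have hMv : M *ᵥ v = s⁻¹ • v := by
    have h1 : M *ᵥ ((hpS n lam) *ᵥ v) = v := by
      rw [mulVec_mulVec, hMS, one_mulVec]
    rw [hSv, mulVec_smul] at h1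
    funext j
    have := congrFun h1 j
    simp only [Pi.smul_apply, smul_eq_mul] at this ⊢
    field_simp
    linarith [this]
  have hsle1 : s ≤ 1 := by
    have h1 : s⁻¹ * (v ⬝ᵥ v) = v ⬝ᵥ v + lam * ((A *ᵥ v) ⬝ᵥ (A *ᵥ v)) := by
      have := hquad v
      rw [hMv] at this
      simpa [dotProduct_smul, smul_eq_mul] using this
    have hAv : 0 ≤ (A *ᵥ v) ⬝ᵥ (A *ᵥ v) := by
      have := dotProduct_star_self_nonneg (A *ᵥ v)
      simpa using this
    have hinv : 1 ≤ s⁻¹ := by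
      nlinarith
    have hmul : s * s⁻¹ = 1 := mul_inv_cancel₀ hspos.ne'
    nlinarith
  have hμval : μ = 1 - δ * s := by
    rw [hs]
    field_simp
    ring
  rw [abs_lt]
  constructor <;> nlinarith
end
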